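/- Let 𝒜 be a deterministic automaton whose states all lie on a single simple cycle of length n labeled by a single letter a (i·a = next state, cyclically), with final states given by the positions where a binary word w = b₁…b_n has letter 1. Then two states i, j are Nerode-equivalent if and only if the circular shifts of w by i and by j coincide: b_{i+k mod n} = b_{j+k mod n} for all k ≥ 0. Consequently the cyclic automaton 𝒜_w is minimal if and only if w is a primitive word. -/

import Mathlib

def run {Q A : Type*} (step : Q → A → Q) : Q → List A → Q
  | q, [] => q
  | q, a :: w => run step (step q a) w

def future {Q A : Type*} (step : Q → A → Q) (F : Set Q) (q : Q) : Set (List A) :=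
  {w | run step q w ∈ F}

open Fin.NatCast

lemma run_cyclic {n : ℕ} [NeZero n] (q : Fin n) (w : List Unit) :
    run (fun (s : Fin n) (_ : Unit) => s + 1) q w = q + (w.length : Fin n) := by
  induction w generalizing q with
  | nil => simp [run]
  | cons a t ih =>
      simp only [run, ih, List.length_cons]
      push_cast
      open Fin.CommRing in ring

lemma future_iff {n : ℕ} [NeZero n] (b : Fin n → Bool) (i j : Fin n) :
    future (fun (s : Fin n) (_ : Unit) => s + 1) {s : Fin n | b s = true} i =
      future (fun (s : Fin n) (_ : Unit) => s + 1) {s : Fin n | b s = true} j ↔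
    ∀ k : ℕ, b (i + (k : Fin n)) = b (j + (k : Fin n)) := by
  constructor
  · intro h k
    have := Set.ext_iff.mp h (List.replicate k ())
    simp only [future, Set.mem_setOf_eq, run_cyclic, List.length_replicate] at this
    rw [Bool.eq_iff_iff]
    simpa using this
  · intro h
    ext w
    simp only [future, Set.mem_setOf_eq, run_cyclic]
    rw [h w.length]

/-- In the cyclic automaton of a binary circular word `b` of length `n`, two states
are Nerode-equivalent iff the corresponding circular shifts of `b` coincide;
consequently the automaton is minimal iff the circular word is primitive
(no nontrivial rotation fixes it). -/
theorem stmt_15 (n : ℕ) [NeZero n] (b : Fin n → Bool) :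
    (∀ i j : Fin n,
        future (fun (s : Fin n) (_ : Unit) => s + 1) {s : Fin n | b s = true} i =
          future (fun (s : Fin n) (_ : Unit) => s + 1) {s : Fin n | b s = true} j ↔
        ∀ k : ℕ, b (i + (k : Fin n)) = b (j + (k : Fin n))) ∧
    ((∀ i j : Fin n,
        future (fun (s : Fin n) (_ : Unit) => s + 1) {s : Fin n | b s = true} i =
          future (fun (s : Fin n) (_ : Unit) => s + 1) {s : Fin n | b s = true} j →
        i = j) ↔
      ∀ d : Fin n, (∀ i : Fin n, b (i + d) = b i) → d = 0) := by
  refine ⟨fun i j => future_iff b i j, ?_⟩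
  constructor
  · intro hmin d hd
    have h : future (fun (s : Fin n) (_ : Unit) => s + 1) {s : Fin n | b s = true} d =
        future (fun (s : Fin n) (_ : Unit) => s + 1) {s : Fin n | b s = true} 0 := by
      rw [future_iff]
      intro k
      have := hd (k : Fin n)
      rw [add_comm] at this
      rw [this, zero_add]
    simpa using hmin d 0 h
  · intro hprim i j h
    rw [future_iff] at h
    have hd : j - i = 0 := by
      apply hprim
      intro x
      have hk : i + ((x - i).val : Fin n) = x := by
        rw [Fin.cast_val_eq_self]
        open Fin.CommRing in ring
      have := h (x - i).val
      rw [hk] at this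
      have hj : j + ((x - i).val : Fin n) = x + (j - i) := by
        rw [Fin.cast_val_eq_self]
        open Fin.CommRing in ring
      rw [hj] at this
      exact this.symm
    have : j = i := by
      have := sub_eq_zero.mp hd
      exact this
    exact this.symm
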